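/- arXiv:2208.07413 — 6 statements merged into one kernel-verified Lean document; each statement's English description precedes it below -/
import Mathlib

section
/- The centralizer in M_n(R) of the ring of G-circulant matrices (with respect to a listing {g_i}) equals the ring of G^{op}-circulant matrices with entries in the center Z(R) of R (with respect to the corresponding listing {g_i^{op}}). -/
/-- A matrix over `R`, indexed by a finite group `G`, is `G`-circulant if
`A (g*x) (g*y) = A x y` for all `g, x, y`. -/
def GCirculant {G R : Type*} [Group G] (A : Matrix G G R) : Prop :=
  ∀ g x y : G, A (g * x) (g * y) = A x y

/-- The centralizer in `M_n(R)` of the ring of `G`-circulant matrices is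
exactly the set of `Gᵒᵖ`-circulant matrices (i.e. `B (x*g) (y*g) = B x y`)
with entries in the center of `R`. -/
theorem centralizer_gcirculant (G R : Type*) [Group G] [Fintype G]
    [DecidableEq G] [Ring R] :
    {B : Matrix G G R | ∀ A : Matrix G G R, GCirculant A → A * B = B * A} =
      {B : Matrix G G R |
        (∀ g x y : G, B (x * g) (y * g) = B x y) ∧
        ∀ x y : G, B x y ∈ Set.center R} := by
  ext B
  simp only [Set.mem_setOf_eq]
  constructor
  · intro h
    have key : ∀ (g : G) (r : R) (x y : G), r * B (x * g) y = B x (y * g⁻¹) * r := by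
      intro g r x y
      have hA : GCirculant (Matrix.of fun u v : G => if v = u * g then r else 0) := by
        intro a u v
        simp only [Matrix.of_apply]
        congr 1
        rw [mul_assoc, mul_right_inj]
      have := congrFun (congrFun (h _ hA) x) y
      rw [Matrix.mul_apply, Matrix.mul_apply] at this
      simp only [Matrix.of_apply, ite_mul, zero_mul, mul_ite, mul_zero] at this
      have h1 : (∑ z : G, if z = x * g then r * B z y else 0) = r * B (x * g) y := by
        simp
      have h2 : (∑ z : G, if y = z * g then B x z * r else 0) = B x (y * g⁻¹) * r := by
        have : ∀ z : G, (y = z * g) ↔ (z = y * g⁻¹) := by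
          intro z
          constructor
          · intro hz; rw [hz]; group
          · intro hz; rw [hz]; group
        simp only [this]
        simp
      rw [h1, h2] at this
      exact this
    constructor
    · intro g x y
      have := key g 1 x (y * g)
      simpa using this
    · intro x y
      rw [Semigroup.mem_center_iff]
      intro r
      have := key 1 r x y
      simpa using this
  · rintro ⟨hcirc, hcen⟩ A hA
    ext x y
    rw [Matrix.mul_apply, Matrix.mul_apply]
    refine Fintype.sum_equiv
      ((Equiv.inv G).trans ((Equiv.mulLeft y).trans (Equiv.mulRight x))) _ _ ?_
    intro z
    simp only [Equiv.trans_apply, Equiv.inv_apply, Equiv.coe_mulLeft,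
      Equiv.coe_mulRight]
    have e1 : A x z = A 1 (x⁻¹ * z) := by
      have := hA x⁻¹ x z; simpa using this.symm
    have e2 : A (y * z⁻¹ * x) y = A 1 (x⁻¹ * z) := by
      have := hA (y * z⁻¹ * x)⁻¹ (y * z⁻¹ * x) y
      rw [inv_mul_cancel] at this
      rw [← this]
      congr 1
      group
    have e3 : B z y = B (z * y⁻¹) 1 := by
      have := hcirc y⁻¹ z y; simpa using this.symm
    have e4 : B x (y * z⁻¹ * x) = B (z * y⁻¹) 1 := by
      have := hcirc (y * z⁻¹ * x)⁻¹ x (y * z⁻¹ * x)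
      rw [mul_inv_cancel] at this
      rw [← this]
      congr 1
      group
    rw [e1, e2, e3, e4]
    exact ((Semigroup.mem_center_iff.mp (hcen (z * y⁻¹) 1)) (A 1 (x⁻¹ * z)))
end

section
/- Let G_1,...,G_d be finite groups of orders k_1,...,k_d with n = k_1+...+k_d, and R a unital ring. A matrix A in M_n(R), written in d×d block form with blocks A_{ij} of size k_i × k_j, lies in the join ring J_{G_1,...,G_d}(R) (i.e. each diagonal block A_{ii} is G_i-circulant and each off-diagonal block A_{ij} is a constant multiple of the all-ones matrix) if and only if A commutes with diag(P_{g_1},...,P_{g_d}) for every (g_1,...,g_d) ∈ G_1 × ... × G_d, where P_{g_i} is the permutation matrix of left multiplication by g_i on G_i. -/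
/-- A block matrix (indexed by the disjoint union of the groups `G i`) is a
join of `G i`-circulant matrices if each diagonal block is `G i`-circulant and
each off-diagonal block is constant. -/
def IsJoin {d : ℕ} {G : Fin d → Type*} [∀ i, Group (G i)] {R : Type*}
    (A : Matrix ((i : Fin d) × G i) ((i : Fin d) × G i) R) : Prop :=
  (∀ (i : Fin d) (g x y : G i), A ⟨i, g * x⟩ ⟨i, g * y⟩ = A ⟨i, x⟩ ⟨i, y⟩) ∧
  (∀ (i j : Fin d), i ≠ j → ∀ (x x' : G i) (y y' : G j),
    A ⟨i, x⟩ ⟨j, y⟩ = A ⟨i, x'⟩ ⟨j, y'⟩)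

/-- The block-diagonal permutation matrix `diag (P_{g 1}, ..., P_{g d})` given
a tuple `g` of group elements. -/
def blockPmat {d : ℕ} {G : Fin d → Type*} [∀ i, Group (G i)]
    [∀ i, DecidableEq (G i)] (R : Type*) [Ring R] (g : ∀ i, G i) :
    Matrix ((i : Fin d) × G i) ((i : Fin d) × G i) R :=
  fun p q => if (⟨p.1, g p.1 * p.2⟩ : (i : Fin d) × G i) = q then 1 else 0

private lemma sigma_key {d : ℕ} {G : Fin d → Type*} [∀ i, Group (G i)]
    (g : ∀ i, G i) (r q : (i : Fin d) × G i) :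
    (⟨r.1, g r.1 * r.2⟩ : (i : Fin d) × G i) = q ↔
      r = ⟨q.1, (g q.1)⁻¹ * q.2⟩ := by
  constructor
  · rintro rfl; simp
  · rintro rfl; simp

private lemma pmul_apply {d : ℕ} {G : Fin d → Type*} [∀ i, Group (G i)]
    [∀ i, Fintype (G i)] [∀ i, DecidableEq (G i)] {R : Type*} [Ring R]
    (A : Matrix ((i : Fin d) × G i) ((i : Fin d) × G i) R)
    (g : ∀ i, G i) (p q : (i : Fin d) × G i) :
    (blockPmat R g * A) p q = A ⟨p.1, g p.1 * p.2⟩ q := by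
  simp [Matrix.mul_apply, blockPmat]

private lemma mulp_apply {d : ℕ} {G : Fin d → Type*} [∀ i, Group (G i)]
    [∀ i, Fintype (G i)] [∀ i, DecidableEq (G i)] {R : Type*} [Ring R]
    (A : Matrix ((i : Fin d) × G i) ((i : Fin d) × G i) R)
    (g : ∀ i, G i) (p q : (i : Fin d) × G i) :
    (A * blockPmat R g) p q = A p ⟨q.1, (g q.1)⁻¹ * q.2⟩ := by
  simp only [Matrix.mul_apply, blockPmat, sigma_key, mul_ite, mul_one, mul_zero]
  rw [Finset.sum_ite_eq' (Finset.univ) (⟨q.1, (g q.1)⁻¹ * q.2⟩ : (i : Fin d) × G i)]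
  simp

/-- `A` lies in the join ring iff it commutes with all the block-diagonal
permutation matrices `diag (P_{g 1}, ..., P_{g d})`. -/
theorem isJoin_iff_commutes {d : ℕ} {G : Fin d → Type*} [∀ i, Group (G i)]
    [∀ i, Fintype (G i)] [∀ i, DecidableEq (G i)] {R : Type*} [Ring R]
    (A : Matrix ((i : Fin d) × G i) ((i : Fin d) × G i) R) :
    IsJoin A ↔ ∀ g : ∀ i, G i, blockPmat R g * A = A * blockPmat R g := by
  constructor
  · rintro ⟨hdiag, hoff⟩ g
    ext p q
    rw [pmul_apply, mulp_apply]
    obtain ⟨i, x⟩ := p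
    obtain ⟨j, y⟩ := q
    by_cases hij : i = j
    · subst hij
      have := hdiag i (g i) x ((g i)⁻¹ * y)
      simpa using this
    · exact hoff i j hij (g i * x) x y ((g j)⁻¹ * y)
  · intro h
    have key : ∀ (g : ∀ i, G i) (p q : (i : Fin d) × G i),
        A ⟨p.1, g p.1 * p.2⟩ q = A p ⟨q.1, (g q.1)⁻¹ * q.2⟩ := by
      intro g p q
      have := congrFun (congrFun (h g) p) q
      rwa [pmul_apply, mulp_apply] at this
    constructor
    · intro i g x y
      have := key (Function.update (fun k => (1 : G k)) i g) ⟨i, x⟩ ⟨i, g * y⟩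
      simpa using this
    · intro i j hij x x' y y'
      have h1 := key (Function.update (fun k => (1 : G k)) i (x' * x⁻¹)) ⟨i, x⟩ ⟨j, y⟩
      have h2 := key (Function.update (fun k => (1 : G k)) j (y * y'⁻¹)) ⟨i, x⟩ ⟨j, y⟩
      have h3 := key (Function.update (fun k => (1 : G k)) i (x' * x⁻¹)) ⟨i, x⟩ ⟨j, y'⟩
      simp [Function.update_of_ne (Ne.symm hij), Function.update_of_ne hij,
        mul_assoc] at h1 h2 h3
      exact h2.trans h3.symm
end

section
/- The join J_{G_1,...,G_d}(R) of G_i-circulant matrices is a unital subring of M_n(R), where n = |G_1| + ... + |G_d|; in particular it is closed under matrix multiplication. -/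
/-- Row sums of a circulant function do not depend on the row. -/
lemma circ_row_sum {G R : Type*} [Group G] [Fintype G] [AddCommMonoid R]
    (f : G → G → R) (hf : ∀ g x y, f (g * x) (g * y) = f x y) (x x' : G) :
    ∑ z, f x z = ∑ z, f x' z := by
  refine Fintype.sum_equiv (Equiv.mulLeft (x' * x⁻¹)) _ _ (fun z => ?_)
  have := hf (x' * x⁻¹) x z
  simpa [mul_assoc] using this.symm

/-- Column sums of a circulant function do not depend on the column. -/
lemma circ_col_sum {G R : Type*} [Group G] [Fintype G] [AddCommMonoid R]
    (f : G → G → R) (hf : ∀ g x y, f (g * x) (g * y) = f x y) (y y' : G) :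
    ∑ z, f z y = ∑ z, f z y' := by
  refine Fintype.sum_equiv (Equiv.mulLeft (y' * y⁻¹)) _ _ (fun z => ?_)
  have := hf (y' * y⁻¹) z y
  simpa [mul_assoc] using this.symm

/-- The join of the `G i`-circulant matrices is a unital subring of the full
matrix ring; in particular it is closed under matrix multiplication. -/
theorem isJoin_subring {d : ℕ} (G : Fin d → Type*) [∀ i, Group (G i)]
    [∀ i, Fintype (G i)] [∀ i, DecidableEq (G i)] (R : Type*) [Ring R] :
    ∃ S : Subring (Matrix ((i : Fin d) × G i) ((i : Fin d) × G i) R),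
      (S : Set (Matrix ((i : Fin d) × G i) ((i : Fin d) × G i) R)) =
        {A | IsJoin A} := by
  refine ⟨{
    carrier := {A | IsJoin A}
    zero_mem' := ⟨fun i g x y => rfl, fun i j _ x x' y y' => rfl⟩
    one_mem' := ?one
    add_mem' := ?add
    neg_mem' := ?neg
    mul_mem' := ?mul }, rfl⟩
  case one =>
    constructor
    · intro i g x y
      by_cases h : x = y
      · subst h; simp
      · rw [Matrix.one_apply_ne, Matrix.one_apply_ne]
        · simp [h]
        · simp [h, mul_right_cancel_iff]
    · intro i j hij x x' y y'
      rw [Matrix.one_apply_ne, Matrix.one_apply_ne] <;>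
        exact fun h => hij (congrArg Sigma.fst h)
  case add =>
    rintro A B ⟨hA1, hA2⟩ ⟨hB1, hB2⟩
    exact ⟨fun i g x y => by simp [Matrix.add_apply, hA1 i g x y, hB1 i g x y],
      fun i j hij x x' y y' => by
        simp [Matrix.add_apply, hA2 i j hij x x' y y', hB2 i j hij x x' y y']⟩
  case neg =>
    rintro A ⟨hA1, hA2⟩
    exact ⟨fun i g x y => by simp [Matrix.neg_apply, hA1 i g x y],
      fun i j hij x x' y y' => by simp [Matrix.neg_apply, hA2 i j hij x x' y y']⟩
  case mul =>
    rintro A B ⟨hA1, hA2⟩ ⟨hB1, hB2⟩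
    constructor
    · intro i g x y
      rw [Matrix.mul_apply, Matrix.mul_apply, ← Finset.univ_sigma_univ,
        Finset.sum_sigma, Finset.sum_sigma]
      refine Finset.sum_congr rfl (fun l _ => ?_)
      by_cases hl : l = i
      · subst hl
        refine Fintype.sum_equiv (Equiv.mulLeft g⁻¹) _ _ (fun z => ?_)
        simp only [Equiv.coe_mulLeft]
        rw [← hA1 l g x (g⁻¹ * z), ← hB1 l g (g⁻¹ * z) y, mul_inv_cancel_left]
      · refine Finset.sum_congr rfl (fun z _ => ?_)
        rw [hA2 i l (Ne.symm hl) (g * x) x z z, hB2 l i hl z z (g * y) y]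
    · intro i j hij x x' y y'
      rw [Matrix.mul_apply, Matrix.mul_apply, ← Finset.univ_sigma_univ,
        Finset.sum_sigma, Finset.sum_sigma]
      refine Finset.sum_congr rfl (fun l _ => ?_)
      by_cases hli : l = i
      · subst hli
        have hB : ∀ z : G l, B ⟨l, z⟩ ⟨j, y⟩ = B ⟨l, x⟩ ⟨j, y'⟩ :=
          fun z => hB2 l j hij z x y y'
        have hB' : ∀ z : G l, B ⟨l, z⟩ ⟨j, y'⟩ = B ⟨l, x⟩ ⟨j, y'⟩ :=
          fun z => hB2 l j hij z x y' y'
        calc ∑ z, A ⟨l, x⟩ ⟨l, z⟩ * B ⟨l, z⟩ ⟨j, y⟩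
            = (∑ z, A ⟨l, x⟩ ⟨l, z⟩) * B ⟨l, x⟩ ⟨j, y'⟩ := by
              rw [Finset.sum_mul]; exact Finset.sum_congr rfl fun z _ => by rw [hB z]
          _ = (∑ z, A ⟨l, x'⟩ ⟨l, z⟩) * B ⟨l, x⟩ ⟨j, y'⟩ := by
              rw [circ_row_sum (fun a b => A ⟨l, a⟩ ⟨l, b⟩) (hA1 l) x x']
          _ = ∑ z, A ⟨l, x'⟩ ⟨l, z⟩ * B ⟨l, z⟩ ⟨j, y'⟩ := by
              rw [Finset.sum_mul]; exact Finset.sum_congr rfl fun z _ => by rw [hB' z]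
      · by_cases hlj : l = j
        · subst hlj
          have hA : ∀ z : G l, A ⟨i, x⟩ ⟨l, z⟩ = A ⟨i, x⟩ ⟨l, y⟩ :=
            fun z => hA2 i l hij x x z y
          have hA' : ∀ z : G l, A ⟨i, x'⟩ ⟨l, z⟩ = A ⟨i, x⟩ ⟨l, y⟩ :=
            fun z => hA2 i l hij x' x z y
          calc ∑ z, A ⟨i, x⟩ ⟨l, z⟩ * B ⟨l, z⟩ ⟨l, y⟩
              = A ⟨i, x⟩ ⟨l, y⟩ * ∑ z, B ⟨l, z⟩ ⟨l, y⟩ := by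
                rw [Finset.mul_sum]; exact Finset.sum_congr rfl fun z _ => by rw [hA z]
            _ = A ⟨i, x⟩ ⟨l, y⟩ * ∑ z, B ⟨l, z⟩ ⟨l, y'⟩ := by
                rw [circ_col_sum (fun a b => B ⟨l, a⟩ ⟨l, b⟩) (hB1 l) y y']
            _ = ∑ z, A ⟨i, x'⟩ ⟨l, z⟩ * B ⟨l, z⟩ ⟨l, y'⟩ := by
                rw [Finset.mul_sum]; exact Finset.sum_congr rfl fun z _ => by rw [hA' z]
        · refine Finset.sum_congr rfl (fun z _ => ?_)
          rw [hA2 i l (fun h => hli h.symm) x x' z z,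
            hB2 l j (fun h => hlj h) z z y y']
end

section
/- The augmentation map ε : J_{G_1,...,G_d}(R) → M_d(R), sending a block matrix A to the d×d matrix whose (i,j) entry is the common row sum of the (i,j) block of A, is a unital ring homomorphism. -/
/-- The augmentation of a join matrix: the `d × d` matrix of row sums of the
blocks (the `(i,j)` entry is the sum of the row of the `(i,j)` block indexed by
the identity of `G i`). -/
def joinAug {d : ℕ} {G : Fin d → Type*} [∀ i, Group (G i)]
    [∀ i, Fintype (G i)] {R : Type*} [Ring R]
    (A : Matrix ((i : Fin d) × G i) ((i : Fin d) × G i) R) :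
    Matrix (Fin d) (Fin d) R :=
  fun i j => ∑ y : G j, A ⟨i, 1⟩ ⟨j, y⟩

/-- Row sums of a block of a join matrix are independent of the row. -/
lemma rowSum_const {d : ℕ} {G : Fin d → Type*} [∀ i, Group (G i)]
    [∀ i, Fintype (G i)] {R : Type*} [Ring R]
    {B : Matrix ((i : Fin d) × G i) ((i : Fin d) × G i) R} (hB : IsJoin B)
    (k j : Fin d) (z : G k) :
    ∑ y : G j, B ⟨k, z⟩ ⟨j, y⟩ = ∑ y : G j, B ⟨k, 1⟩ ⟨j, y⟩ := by
  rcases eq_or_ne k j with rfl | h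
  · rw [← Equiv.sum_comp (Equiv.mulLeft z) (fun y => B ⟨k, z⟩ ⟨k, y⟩)]
    refine Finset.sum_congr rfl fun y _ => ?_
    have := hB.1 k z 1 y
    simpa using this
  · exact Finset.sum_congr rfl fun y _ => hB.2 k j h z 1 y y

/-- The augmentation map `ε : J_{G_1,...,G_d}(R) → M_d(R)` is a unital ring
homomorphism: it is additive, multiplicative on the join ring, and sends `1`
to `1`. -/
theorem joinAug_ringHom {d : ℕ} (G : Fin d → Type*) [∀ i, Group (G i)]
    [∀ i, Fintype (G i)] [∀ i, DecidableEq (G i)] (R : Type*) [Ring R] :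
    (∀ A B : Matrix ((i : Fin d) × G i) ((i : Fin d) × G i) R,
      joinAug (A + B) = joinAug A + joinAug B) ∧
    (∀ A B : Matrix ((i : Fin d) × G i) ((i : Fin d) × G i) R,
      IsJoin A → IsJoin B → joinAug (A * B) = joinAug A * joinAug B) ∧
    joinAug (1 : Matrix ((i : Fin d) × G i) ((i : Fin d) × G i) R) = 1 := by
  refine ⟨fun A B => ?_, fun A B hA hB => ?_, ?_⟩
  · ext i j
    simp [joinAug, Finset.sum_add_distrib]
  · ext i j
    simp only [joinAug, Matrix.mul_apply]
    rw [Finset.sum_comm]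
    rw [← Finset.univ_sigma_univ, Finset.sum_sigma]
    refine Finset.sum_congr rfl fun k _ => ?_
    calc ∑ z : G k, ∑ y : G j, A ⟨i, 1⟩ ⟨k, z⟩ * B ⟨k, z⟩ ⟨j, y⟩
        = ∑ z : G k, A ⟨i, 1⟩ ⟨k, z⟩ * ∑ y : G j, B ⟨k, z⟩ ⟨j, y⟩ := by
          simp [Finset.mul_sum]
      _ = ∑ z : G k, A ⟨i, 1⟩ ⟨k, z⟩ * ∑ y : G j, B ⟨k, 1⟩ ⟨j, y⟩ := by
          refine Finset.sum_congr rfl fun z _ => ?_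
          rw [rowSum_const hB]
      _ = (∑ z : G k, A ⟨i, 1⟩ ⟨k, z⟩) * ∑ y : G j, B ⟨k, 1⟩ ⟨j, y⟩ := by
          rw [Finset.sum_mul]
  · ext i j
    simp only [joinAug, Matrix.one_apply]
    rcases eq_or_ne i j with rfl | h
    · rw [Finset.sum_eq_single (1 : G i)] <;> simp +contextual [Sigma.ext_iff, eq_comm]
    · refine Eq.trans (Finset.sum_eq_zero fun y _ => ?_) ?_ <;>
        simp [Sigma.ext_iff, h]
end

section
/- The center of J_{G_1,...,G_d}(R) consists exactly of the block-diagonal matrices diag(C_1,...,C_d) with all off-diagonal block coefficients a_{ij} = 0, each C_i lying in the center of R[G_i] (identified with G_i-circulant matrices), and all augmentations equal: ε(C_1) = ε(C_2) = ... = ε(C_d). -/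
/-- The `i`-th diagonal block of a join matrix. -/
def diagBlock {d : ℕ} {G : Fin d → Type*} [∀ i, Group (G i)] {R : Type*}
    (A : Matrix ((i : Fin d) × G i) ((i : Fin d) × G i) R) (i : Fin d) :
    Matrix (G i) (G i) R :=
  fun x y => A ⟨i, x⟩ ⟨i, y⟩

section Helpers

variable {d : ℕ} {G : Fin d → Type*} [∀ i, Group (G i)] [∀ i, Fintype (G i)]
  {R : Type*} [Ring R]

private lemma sigma_sum_block {i : Fin d} (f : ((k : Fin d) × G k) → R)
    (hf : ∀ (k : Fin d) (x : G k), k ≠ i → f ⟨k, x⟩ = 0) :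
    ∑ p : (k : Fin d) × G k, f p = ∑ x : G i, f ⟨i, x⟩ := by
  rw [← Finset.univ_sigma_univ, Finset.sum_sigma]
  refine Finset.sum_eq_single_of_mem i (Finset.mem_univ i) ?_
  intro k _ hk
  exact Finset.sum_eq_zero fun x _ => hf k x hk

/-- Embed a matrix on block `i` as a block matrix (zero elsewhere). -/
private def embed (i : Fin d) (D : Matrix (G i) (G i) R) :
    Matrix ((k : Fin d) × G k) ((k : Fin d) × G k) R :=
  fun p q => if h : p.1 = i ∧ q.1 = i then D (h.1 ▸ p.2) (h.2 ▸ q.2) else 0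

private lemma embed_same (i : Fin d) (D : Matrix (G i) (G i) R) (x y : G i) :
    embed i D ⟨i, x⟩ ⟨i, y⟩ = D x y :=
  dif_pos ⟨rfl, rfl⟩

private lemma embed_ne_left {i k : Fin d} (h : k ≠ i) (D : Matrix (G i) (G i) R)
    (x : G k) (q : (l : Fin d) × G l) : embed i D ⟨k, x⟩ q = 0 :=
  dif_neg fun hc => h hc.1

private lemma embed_ne_right {i k : Fin d} (h : k ≠ i) (D : Matrix (G i) (G i) R)
    (p : (l : Fin d) × G l) (y : G k) : embed i D p ⟨k, y⟩ = 0 :=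
  dif_neg fun hc => h hc.2

private lemma isJoin_embed (i : Fin d) (D : Matrix (G i) (G i) R)
    (hD : GCirculant D) : IsJoin (embed i D) := by
  constructor
  · intro k g x y
    rcases eq_or_ne k i with rfl | hk
    · rw [embed_same, embed_same, hD]
    · rw [embed_ne_left hk, embed_ne_left hk]
  · intro k l hkl x x' y y'
    rcases eq_or_ne k i with rfl | hk
    · rw [embed_ne_right (Ne.symm hkl), embed_ne_right (Ne.symm hkl)]
    · rw [embed_ne_left hk, embed_ne_left hk]

/-- row sums of a diagonal block of a join matrix are constant -/
private lemma row_sum_const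
    (A : Matrix ((k : Fin d) × G k) ((k : Fin d) × G k) R) (hA : IsJoin A)
    (i : Fin d) (x : G i) :
    ∑ y : G i, A ⟨i, x⟩ ⟨i, y⟩ = ∑ y : G i, A ⟨i, 1⟩ ⟨i, y⟩ := by
  have h1 : ∀ y : G i, A ⟨i, x⟩ ⟨i, x * y⟩ = A ⟨i, 1⟩ ⟨i, y⟩ := by
    intro y; simpa using hA.1 i x 1 y
  calc ∑ y : G i, A ⟨i, x⟩ ⟨i, y⟩ = ∑ y : G i, A ⟨i, x⟩ ⟨i, x * y⟩ :=
        (Fintype.sum_equiv (Equiv.mulLeft x) _ _ fun y => rfl).symm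
    _ = ∑ y : G i, A ⟨i, 1⟩ ⟨i, y⟩ := by simp only [h1]

/-- column sums equal the augmentation -/
private lemma col_sum_const
    (A : Matrix ((k : Fin d) × G k) ((k : Fin d) × G k) R) (hA : IsJoin A)
    (j : Fin d) (y : G j) :
    ∑ x : G j, A ⟨j, x⟩ ⟨j, y⟩ = ∑ x : G j, A ⟨j, 1⟩ ⟨j, x⟩ := by
  have h1 : ∀ x : G j, A ⟨j, x⟩ ⟨j, y⟩ = A ⟨j, 1⟩ ⟨j, x⁻¹ * y⟩ := by
    intro x; simpa using (hA.1 j x⁻¹ x y).symm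
  calc ∑ x : G j, A ⟨j, x⟩ ⟨j, y⟩ = ∑ x : G j, A ⟨j, 1⟩ ⟨j, x⁻¹ * y⟩ := by
        simp only [h1]
    _ = ∑ x : G j, A ⟨j, 1⟩ ⟨j, x⟩ :=
        Fintype.sum_equiv ((Equiv.inv (G j)).trans (Equiv.mulRight y)) _ _
          fun x => rfl

private lemma mul_embed_apply
    (A : Matrix ((k : Fin d) × G k) ((k : Fin d) × G k) R)
    (i : Fin d) (D : Matrix (G i) (G i) R) (p : (k : Fin d) × G k) (y : G i) :
    (A * embed i D) p ⟨i, y⟩ = ∑ r : G i, A p ⟨i, r⟩ * D r y := by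
  rw [Matrix.mul_apply]
  rw [sigma_sum_block (i := i) (f := fun q => A p q * embed i D q ⟨i, y⟩)
    (fun k x hk => by simp only [embed_ne_left hk, mul_zero])]
  simp only [embed_same]

private lemma embed_mul_apply
    (A : Matrix ((k : Fin d) × G k) ((k : Fin d) × G k) R)
    (i : Fin d) (D : Matrix (G i) (G i) R) (x : G i) (q : (k : Fin d) × G k) :
    (embed i D * A) ⟨i, x⟩ q = ∑ r : G i, D x r * A ⟨i, r⟩ q := by
  rw [Matrix.mul_apply]
  rw [sigma_sum_block (i := i) (f := fun p => embed i D ⟨i, x⟩ p * A p q)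
    (fun k r hk => by simp only [embed_ne_right hk, zero_mul])]
  simp only [embed_same]

private lemma embed_mul_apply_ne
    (A : Matrix ((k : Fin d) × G k) ((k : Fin d) × G k) R)
    {i k : Fin d} (h : k ≠ i) (D : Matrix (G i) (G i) R) (x : G k)
    (q : (l : Fin d) × G l) : (embed i D * A) ⟨k, x⟩ q = 0 := by
  rw [Matrix.mul_apply]
  exact Finset.sum_eq_zero fun p _ => by rw [embed_ne_left h, zero_mul]

/-- Entries of a matrix commuting with all circulants are central in `R`. -/
private lemma entries_central {H : Type*} [Group H] [Fintype H]
    (C : Matrix H H R)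
    (hC : ∀ D : Matrix H H R, GCirculant D → C * D = D * C)
    (x y : H) (b : R) : C x y * b = b * C x y := by
  classical
  have hscal : GCirculant (b • (1 : Matrix H H R)) := by
    intro g u v
    simp [Matrix.smul_apply, Matrix.one_apply, mul_left_cancel_iff]
  have := congrFun (congrFun (hC _ hscal) x) y
  rw [Matrix.mul_apply, Matrix.mul_apply] at this
  simpa [Matrix.smul_apply, Matrix.one_apply, mul_ite, ite_mul] using this

end Helpers


/-- A join matrix `A` is in the center of the join ring iff all its
off-diagonal blocks vanish, each diagonal block lies in the center of
`R[G i]` (i.e. commutes with every `G i`-circulant matrix), and all diagonal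
blocks have the same augmentation (common row sum). -/
theorem mem_center_join_iff {d : ℕ} {G : Fin d → Type*} [∀ i, Group (G i)]
    [∀ i, Fintype (G i)] {R : Type*} [Ring R]
    (A : Matrix ((i : Fin d) × G i) ((i : Fin d) × G i) R) (hA : IsJoin A) :
    (∀ B : Matrix ((i : Fin d) × G i) ((i : Fin d) × G i) R,
        IsJoin B → A * B = B * A) ↔
      ((∀ (i j : Fin d), i ≠ j → ∀ (x : G i) (y : G j), A ⟨i, x⟩ ⟨j, y⟩ = 0) ∧
       (∀ (i : Fin d) (D : Matrix (G i) (G i) R), GCirculant D →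
          diagBlock A i * D = D * diagBlock A i) ∧
       (∀ i j : Fin d,
          ∑ y : G i, A ⟨i, 1⟩ ⟨i, y⟩ = ∑ y : G j, A ⟨j, 1⟩ ⟨j, y⟩)) := by
  classical
  constructor
  · intro h
    have hone : ∀ i : Fin d, GCirculant (1 : Matrix (G i) (G i) R) := by
      intro i g u v; simp [Matrix.one_apply, mul_left_cancel_iff]
    -- (1) off-diagonal blocks vanish
    have h0 : ∀ (i j : Fin d), i ≠ j → ∀ (x : G i) (y : G j),
        A ⟨i, x⟩ ⟨j, y⟩ = 0 := by
      intro i j hij x y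
      have hB := h (embed j (1 : Matrix (G j) (G j) R)) (isJoin_embed j 1 (hone j))
      have := congrFun (congrFun hB ⟨i, x⟩) ⟨j, y⟩
      rw [mul_embed_apply, embed_mul_apply_ne A hij] at this
      simpa [Matrix.one_apply] using this
    refine ⟨h0, ?_, ?_⟩
    -- (2) diagonal blocks central among circulants
    · intro i D hD
      have hB := h (embed i D) (isJoin_embed i D hD)
      ext x y
      have := congrFun (congrFun hB ⟨i, x⟩) ⟨i, y⟩
      rw [mul_embed_apply, embed_mul_apply] at this
      simpa [diagBlock, Matrix.mul_apply] using this
    -- (3) equal augmentations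
    · intro i j
      have hJ : IsJoin (fun _ _ => (1 : R) :
          Matrix ((k : Fin d) × G k) ((k : Fin d) × G k) R) :=
        ⟨fun _ _ _ _ => rfl, fun _ _ _ _ _ _ _ => rfl⟩
      have hB := h _ hJ
      have key : ((A * Matrix.of fun _ _ => (1 : R) :
            Matrix ((k : Fin d) × G k) ((k : Fin d) × G k) R)) ⟨i, 1⟩ ⟨j, 1⟩ =
          (((Matrix.of fun _ _ => (1 : R)) * A :
            Matrix ((k : Fin d) × G k) ((k : Fin d) × G k) R)) ⟨i, 1⟩ ⟨j, 1⟩ :=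
        congrFun (congrFun hB ⟨i, 1⟩) ⟨j, 1⟩
      rw [Matrix.mul_apply, Matrix.mul_apply] at key
      simp only [Matrix.of_apply, mul_one, one_mul] at key
      rw [sigma_sum_block (i := i) (f := fun p => A ⟨i, 1⟩ p)
          (fun k x hk => h0 i k (Ne.symm hk) 1 x),
        sigma_sum_block (i := j) (f := fun p => A p ⟨j, 1⟩)
          (fun k x hk => h0 k j hk x 1)] at key
      rw [key, col_sum_const A hA j 1]
  · rintro ⟨h0, hc, he⟩ B hB
    -- entries of diagonal blocks are central in R
    have hcent : ∀ (i : Fin d) (x y : G i) (b : R),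
        A ⟨i, x⟩ ⟨i, y⟩ * b = b * A ⟨i, x⟩ ⟨i, y⟩ := fun i x y b =>
      entries_central (diagBlock A i) (hc i) x y b
    ext ⟨i, x⟩ ⟨j, y⟩
    rw [Matrix.mul_apply, Matrix.mul_apply]
    rw [sigma_sum_block (i := i) (f := fun p => A ⟨i, x⟩ p * B p ⟨j, y⟩)
        (fun k r hk => by simp only [h0 i k (Ne.symm hk) x r, zero_mul]),
      sigma_sum_block (i := j) (f := fun p => B ⟨i, x⟩ p * A p ⟨j, y⟩)
        (fun k r hk => by simp only [h0 k j hk r y, mul_zero])]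
    rcases eq_or_ne i j with rfl | hij
    · -- diagonal block: use centrality in R[G i]
      have := congrFun (congrFun (hc i (diagBlock B i) (fun g u v => hB.1 i g u v)) x) y
      simpa [Matrix.mul_apply, diagBlock] using this
    · -- off-diagonal: both sides equal ε * b = b * ε
      have hBconst : ∀ r : G i, B ⟨i, r⟩ ⟨j, y⟩ = B ⟨i, 1⟩ ⟨j, y⟩ := fun r =>
        hB.2 i j hij r 1 y y
      have hBconst' : ∀ r : G j, B ⟨i, x⟩ ⟨j, r⟩ = B ⟨i, 1⟩ ⟨j, y⟩ := fun r =>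
        hB.2 i j hij x 1 r y
      calc ∑ r : G i, A ⟨i, x⟩ ⟨i, r⟩ * B ⟨i, r⟩ ⟨j, y⟩
          = (∑ r : G i, A ⟨i, x⟩ ⟨i, r⟩) * B ⟨i, 1⟩ ⟨j, y⟩ := by
            rw [Finset.sum_mul]; exact Finset.sum_congr rfl fun r _ => by
              rw [hBconst r]
        _ = (∑ r : G j, A ⟨j, 1⟩ ⟨j, r⟩) * B ⟨i, 1⟩ ⟨j, y⟩ := by
            rw [row_sum_const A hA i x, he i j]
        _ = ∑ r : G j, A ⟨j, 1⟩ ⟨j, r⟩ * B ⟨i, 1⟩ ⟨j, y⟩ := by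
            rw [Finset.sum_mul]
        _ = ∑ r : G j, B ⟨i, 1⟩ ⟨j, y⟩ * A ⟨j, 1⟩ ⟨j, r⟩ :=
            Finset.sum_congr rfl fun r _ => hcent j 1 r _
        _ = B ⟨i, 1⟩ ⟨j, y⟩ * ∑ r : G j, A ⟨j, 1⟩ ⟨j, r⟩ := by
            rw [Finset.mul_sum]
        _ = B ⟨i, 1⟩ ⟨j, y⟩ * ∑ r : G j, A ⟨j, r⟩ ⟨j, y⟩ := by
            rw [col_sum_const A hA j y]
        _ = ∑ r : G j, B ⟨i, 1⟩ ⟨j, y⟩ * A ⟨j, r⟩ ⟨j, y⟩ := by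
            rw [Finset.mul_sum]
        _ = ∑ r : G j, B ⟨i, x⟩ ⟨j, r⟩ * A ⟨j, r⟩ ⟨j, y⟩ :=
            Finset.sum_congr rfl fun r _ => by rw [hBconst' r]
end

section
/- Let k be a field, d ≥ 2, and G_1,...,G_d finite groups with |G_1| = 0 in k. Then the join algebra J_{G_1,...,G_d}(k) is not a Frobenius algebra: for every k-linear functional λ : J_{G_1,...,G_d}(k) → k, the kernel of λ contains a nonzero left ideal. In particular, J_{G_1,...,G_d}(k) is not isomorphic to the group algebra k[G] of any finite group G. -/
set_option synthInstance.maxHeartbeats 1000000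
set_option maxHeartbeats 1000000

/-- Let `k` be a field, `d ≥ 2`, and `|G_1| = 0` in `k`. Then the join algebra
`J_{G_1,...,G_d}(k)` is not Frobenius: the kernel of every `k`-linear
functional on it contains a nonzero left ideal (here, the span of a nonzero
element `v` with `A * v ∈ k·v` for all `A` in the join algebra). In
particular, the join algebra is not isomorphic to the group algebra of any
finite group. -/
theorem join_not_frobenius {d : ℕ} (hd : 2 ≤ d) (G : Fin d → Type*)
    [∀ i, Group (G i)] [∀ i, Fintype (G i)] [∀ i, DecidableEq (G i)]
    (k : Type*) [Field k]
    (hG1 : ((Fintype.card (G ⟨0, by omega⟩) : k) = 0))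
    (S : Subalgebra k (Matrix ((i : Fin d) × G i) ((i : Fin d) × G i) k))
    (hS : (S : Set (Matrix ((i : Fin d) × G i) ((i : Fin d) × G i) k)) =
      {A | IsJoin A}) :
    (∀ lam : S →ₗ[k] k, ∃ v : S, v ≠ 0 ∧ lam v = 0 ∧
      ∀ A : S, ∃ c : k,
        ((A * v : S) : Matrix ((i : Fin d) × G i) ((i : Fin d) × G i) k) =
          c • (v : Matrix ((i : Fin d) × G i) ((i : Fin d) × G i) k)) ∧
    (∀ (H : Type*) [Group H] [Fintype H],
      IsEmpty (S ≃ₐ[k] MonoidAlgebra k H)) := by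
  classical
  have h0d : 0 < d := by omega
  have h1d : 1 < d := by omega
  set i0 : Fin d := ⟨0, h0d⟩ with hi0def
  set i1 : Fin d := ⟨1, h1d⟩ with hi1def
  have hcard : ((Fintype.card (G i0) : k)) = 0 := hG1
  have hne01 : i0 ≠ i1 := by
    intro h
    have := congrArg Fin.val h
    simp [hi0def, hi1def] at this
  have hmemS : ∀ A : Matrix ((i : Fin d) × G i) ((i : Fin d) × G i) k,
      A ∈ S ↔ IsJoin A := by
    intro A
    rw [← SetLike.mem_coe, hS]
    exact Iff.rfl
  -- the matrix V a
  have hVmem : ∀ a : Fin d → k,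
      (Matrix.of fun p q : (i : Fin d) × G i =>
        if p.1 = i0 then a q.1 else 0) ∈ S := by
    intro a
    rw [hmemS]
    exact ⟨fun i g x y => rfl, fun i j hij x x' y y' => rfl⟩
  let Vl : (Fin d → k) →ₗ[k] S :=
    { toFun := fun a => ⟨Matrix.of fun p q =>
        if p.1 = i0 then a q.1 else 0, hVmem a⟩
      map_add' := by
        intro a b
        apply Subtype.ext
        ext p q
        simp only [Matrix.of_apply, AddMemClass.coe_add, Matrix.add_apply,
          Pi.add_apply]
        split_ifs <;> simp
      map_smul' := by
        intro c a
        apply Subtype.ext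
        ext p q
        simp only [Matrix.of_apply, RingHom.id_apply, SetLike.val_smul,
          Matrix.smul_apply, Pi.smul_apply, smul_eq_mul]
        split_ifs <;> simp }
  have hVcoe : ∀ (a : Fin d → k) (p q : (i : Fin d) × G i),
      (Vl a : Matrix ((i : Fin d) × G i) ((i : Fin d) × G i) k) p q =
        if p.1 = i0 then a q.1 else 0 := fun a p q => rfl
  -- nonzero
  have hVne : ∀ a : Fin d → k, a ≠ 0 → Vl a ≠ 0 := by
    intro a ha h
    obtain ⟨j, hj⟩ := Function.ne_iff.mp ha
    apply hj
    have := congrArg (fun x : S =>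
      (x : Matrix ((i : Fin d) × G i) ((i : Fin d) × G i) k) ⟨i0, 1⟩ ⟨j, 1⟩) h
    simpa [hVcoe] using this
  -- multiplication
  have hmul : ∀ (A : S) (a : Fin d → k),
      ((A * Vl a : S) : Matrix ((i : Fin d) × G i) ((i : Fin d) × G i) k) =
        (∑ w : G i0, (A : Matrix ((i : Fin d) × G i) ((i : Fin d) × G i) k)
            ⟨i0, 1⟩ ⟨i0, w⟩) •
          (Vl a : Matrix ((i : Fin d) × G i) ((i : Fin d) × G i) k) := by
    intro A a
    obtain ⟨hdiag, hoff⟩ :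
        IsJoin (A : Matrix ((i : Fin d) × G i) ((i : Fin d) × G i) k) :=
      (hmemS _).mp A.2
    rw [MulMemClass.coe_mul]
    ext p q
    rw [Matrix.mul_apply, Matrix.smul_apply, smul_eq_mul]
    have hsum : ∑ r : (i : Fin d) × G i,
        (A : Matrix ((i : Fin d) × G i) ((i : Fin d) × G i) k) p r *
          (Vl a : Matrix ((i : Fin d) × G i) ((i : Fin d) × G i) k) r q =
        (∑ z : G i0, (A : Matrix ((i : Fin d) × G i) ((i : Fin d) × G i) k)
          p ⟨i0, z⟩) * a q.1 := by
      rw [← Finset.univ_sigma_univ, Finset.sum_sigma, Finset.sum_eq_single i0]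
      · rw [Finset.sum_mul]
        exact Finset.sum_congr rfl fun z _ => by rw [hVcoe]; simp
      · intro i _ hi
        simp [hVcoe, hi]
      · simp
    rw [hsum]
    obtain ⟨i, x⟩ := p
    by_cases hi : i = i0
    · subst hi
      rw [hVcoe]
      have h1 : ∀ w : G i0,
          (A : Matrix ((i : Fin d) × G i) ((i : Fin d) × G i) k)
            ⟨i0, x⟩ ⟨i0, x * w⟩ =
          (A : Matrix ((i : Fin d) × G i) ((i : Fin d) × G i) k)
            ⟨i0, 1⟩ ⟨i0, w⟩ := by
        intro w
        have := hdiag i0 x 1 w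
        rwa [mul_one] at this
      have h2 : (∑ z : G i0,
          (A : Matrix ((i : Fin d) × G i) ((i : Fin d) × G i) k) ⟨i0, x⟩ ⟨i0, z⟩)
          = ∑ w : G i0,
          (A : Matrix ((i : Fin d) × G i) ((i : Fin d) × G i) k) ⟨i0, 1⟩ ⟨i0, w⟩ := by
        rw [← Equiv.sum_comp (Equiv.mulLeft x)
          (fun z => (A : Matrix ((i : Fin d) × G i) ((i : Fin d) × G i) k)
            ⟨i0, x⟩ ⟨i0, z⟩)]
        exact Finset.sum_congr rfl fun w _ => h1 w
      rw [h2]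
      simp
    · rw [hVcoe]
      simp only [if_neg hi, mul_zero]
      have h3 : ∀ z : G i0,
          (A : Matrix ((i : Fin d) × G i) ((i : Fin d) × G i) k)
            ⟨i, x⟩ ⟨i0, z⟩ =
          (A : Matrix ((i : Fin d) × G i) ((i : Fin d) × G i) k)
            ⟨i, x⟩ ⟨i0, 1⟩ := fun z => hoff i i0 hi x x z 1
      rw [Finset.sum_congr rfl fun z _ => h3 z, Finset.sum_const,
        Finset.card_univ, nsmul_eq_mul, hcard, zero_mul, zero_mul]
  -- S-level multiplication
  have hmulS : ∀ (A : S) (a : Fin d → k),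
      A * Vl a = (∑ w : G i0,
        (A : Matrix ((i : Fin d) × G i) ((i : Fin d) × G i) k)
          ⟨i0, 1⟩ ⟨i0, w⟩) • Vl a := by
    intro A a
    apply Subtype.ext
    rw [hmul A a]
    rfl
  -- Part 1
  have part1 : ∀ lam : S →ₗ[k] k, ∃ v : S, v ≠ 0 ∧ lam v = 0 ∧
      ∀ A : S, ∃ c : k,
        ((A * v : S) : Matrix ((i : Fin d) × G i) ((i : Fin d) × G i) k) =
          c • (v : Matrix ((i : Fin d) × G i) ((i : Fin d) × G i) k) := by
    intro lam
    set e0 : Fin d → k := Pi.single i0 1 with he0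
    set e1 : Fin d → k := Pi.single i1 1 with he1
    by_cases h0 : lam (Vl e0) = 0
    · refine ⟨Vl e0, hVne _ ?_, h0, fun A => ⟨_, hmul A e0⟩⟩
      intro h
      have : e0 i0 = 0 := by rw [h]; rfl
      rw [he0, Pi.single_eq_same] at this
      exact one_ne_zero this
    · set a : Fin d → k := lam (Vl e1) • e0 - lam (Vl e0) • e1 with ha
      refine ⟨Vl a, hVne _ ?_, ?_, fun A => ⟨_, hmul A a⟩⟩
      · intro h
        apply h0
        have hv1 : e0 i1 = 0 := by
          rw [he0]; exact Pi.single_eq_of_ne (Ne.symm hne01) 1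
        have hv2 : e1 i1 = 1 := by
          rw [he1]; exact Pi.single_eq_same i1 1
        have : a i1 = 0 := by rw [h]; rfl
        rw [ha, Pi.sub_apply, Pi.smul_apply, Pi.smul_apply, smul_eq_mul,
          smul_eq_mul, hv1, hv2, mul_zero, mul_one, zero_sub,
          neg_eq_zero] at this
        exact this
      · rw [ha, map_sub, map_sub, map_smul, map_smul, map_smul, map_smul,
          smul_eq_mul, smul_eq_mul, mul_comm, sub_self]
  refine ⟨part1, ?_⟩
  intro H _ _
  constructor
  intro φ
  let lam : S →ₗ[k] k :=
    { toFun := fun s => (φ s).coeff 1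
      map_add' := by
        intro x y
        show (φ (x + y)).coeff 1 = (φ x).coeff 1 + (φ y).coeff 1
        rw [map_add]
        exact Finsupp.add_apply _ _ _
      map_smul' := by
        intro c x
        show (φ (c • x)).coeff 1 = c * (φ x).coeff 1
        rw [map_smul]
        exact MonoidAlgebra.coeff_smul_apply _ _ _ }
  obtain ⟨v, hv0, hlam, hA⟩ := part1 lam
  have hw0 : φ v ≠ 0 := by
    intro h
    exact hv0 (φ.injective (h.trans (map_zero φ).symm))
  obtain ⟨h, hwh⟩ := Finsupp.ne_iff.mp (mt MonoidAlgebra.coeff_eq_zero.mp hw0)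
  rw [Finsupp.coe_zero, Pi.zero_apply] at hwh
  obtain ⟨c, hc⟩ := hA (φ.symm (MonoidAlgebra.single h⁻¹ 1))
  have hcS : φ.symm (MonoidAlgebra.single h⁻¹ 1) * v = c • v := by
    apply Subtype.ext
    rw [hc]
    rfl
  have h2 := congrArg φ hcS
  rw [map_mul, φ.apply_symm_apply, map_smul] at h2
  have h3 := congrArg (fun f : MonoidAlgebra k H => f.coeff 1) h2
  simp only [MonoidAlgebra.single_mul_apply, one_mul, inv_inv, mul_one,
    Finsupp.smul_apply, smul_eq_mul] at h3
  have hval : (φ v).coeff 1 = 0 := hlam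
  have h4 : (c • φ v).coeff (1 : H) = c * (φ v).coeff 1 := MonoidAlgebra.coeff_smul_apply _ _ _
  rw [h4, hval, mul_zero] at h3
  exact hwh h3
end
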